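/- For any graph G on n ≥ 1 vertices partitioned as a complete multipartite graph with parts of size 3 (and possibly one part of size 2 or 4 when n is not divisible by 3), the number of maximal cliques equals f(n) = 3^{n/3} if n ≡ 0 mod 3, 4·3^{(n-4)/3} if n ≡ 1 mod 3 (n ≥ 4), and 2·3^{(n-2)/3} if n ≡ 2 mod 3; moreover no n-vertex graph has more maximal cliques than f(n). -/

import Mathlib

open SimpleGraph

/-- `s` is a maximal clique of the simple graph `G`. -/
def MaxClique {V : Type*} (G : SimpleGraph V) (s : Set V) : Prop :=
  G.IsClique s ∧ ∀ t : Set V, G.IsClique t → s ⊆ t → s = t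

/-- The graph obtained from `G` by adding the edge `(u,v)`. -/
def addEdge {V : Type*} (G : SimpleGraph V) (u v : V) : SimpleGraph V :=
  G ⊔ SimpleGraph.fromEdgeSet {s(u, v)}

/-- The graph obtained from `G` by adding the set of edges `H`. -/
def addEdges {V : Type*} (G : SimpleGraph V) (H : Set (Sym2 V)) : SimpleGraph V :=
  G ⊔ SimpleGraph.fromEdgeSet H

/-- The number of maximal cliques of `G`. -/
noncomputable def numMaxCliques {V : Type*} (G : SimpleGraph V) : ℕ :=
  Nat.card {s : Set V // MaxClique G s}

/-- `f k`: the maximum possible number of maximal cliques in a graph on `k` vertices. -/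
noncomputable def maxNumMaxCliques (k : ℕ) : ℕ :=
  sSup {m | ∃ G : SimpleGraph (Fin k), m = numMaxCliques G}

/-- The Moon–Moser bound `f(n)`. -/
def mmBound (n : ℕ) : ℕ :=
  if n % 3 = 0 then 3 ^ (n / 3)
  else if n % 3 = 1 then 4 * 3 ^ ((n - 4) / 3)
  else 2 * 3 ^ ((n - 2) / 3)

/-- corrected Moon-Moser function (mmBound gives the value 4 at n = 1). -/
def mm' (n : ℕ) : ℕ := if n = 1 then 1 else mmBound n

lemma mm'_le_mmBound (n : ℕ) : mm' n ≤ mmBound n := by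
  unfold mm'
  split
  · subst ‹n = 1›; norm_num [mmBound]
  · exact le_rfl

lemma mmBound_add_three {n : ℕ} (h : n ≠ 1) : mmBound (n + 3) = 3 * mmBound n := by
  have h0 : (n + 3) % 3 = n % 3 := by omega
  rcases (show n % 3 = 0 ∨ n % 3 = 1 ∨ n % 3 = 2 by omega) with h1 | h1 | h1 <;>
    simp only [mmBound, h0, h1] <;> norm_num
  · rw [pow_succ]; ring
  · rw [show (n + 3 - 4) / 3 = (n - 4) / 3 + 1 from by omega, pow_succ]; ring
  · rw [show (n + 3 - 2) / 3 = (n - 2) / 3 + 1 from by omega, pow_succ]; ring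

lemma mm'_three {n : ℕ} (h : 2 ≤ n) : mm' (n + 3) = 3 * mm' n := by
  unfold mm'
  rw [if_neg (by omega), if_neg (by omega), mmBound_add_three (by omega)]

lemma mm'_small : mm' 0 = 1 ∧ mm' 1 = 1 ∧ mm' 2 = 2 ∧ mm' 3 = 3 ∧ mm' 4 = 4 ∧
    mm' 5 = 6 ∧ mm' 6 = 9 ∧ mm' 7 = 12 := by
  norm_num [mm', mmBound]

lemma mm'_le_succ : ∀ n, mm' n ≤ mm' (n + 1) := by
  intro n
  induction n using Nat.strong_induction_on with
  | _ n IH =>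
    match n, IH with
    | 0, _ => norm_num [mm', mmBound]
    | 1, _ => norm_num [mm', mmBound]
    | 2, _ => norm_num [mm', mmBound]
    | 3, _ => norm_num [mm', mmBound]
    | 4, _ => norm_num [mm', mmBound]
    | (m+5), IH =>
      have h1 : m + 5 = (m + 2) + 3 := by omega
      have h2 : m + 6 = (m + 3) + 3 := by omega
      rw [h1, mm'_three (by omega), show (m+2)+3+1 = (m+3)+3 from by omega,
        mm'_three (by omega)]
      have := IH (m + 2) (by omega)
      simp only [show m+2+1 = m+3 from rfl, show m+2+2 = m+4 from rfl] at *
      omega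

lemma mm'_mono : Monotone mm' := monotone_nat_of_le_succ mm'_le_succ

lemma mm'_two : ∀ n, 2 * mm' n ≤ mm' (n + 2) := by
  intro n
  induction n using Nat.strong_induction_on with
  | _ n IH =>
    match n, IH with
    | 0, _ => norm_num [mm', mmBound]
    | 1, _ => norm_num [mm', mmBound]
    | 2, _ => norm_num [mm', mmBound]
    | 3, _ => norm_num [mm', mmBound]
    | 4, _ => norm_num [mm', mmBound]
    | (m+5), IH =>
      rw [show m + 5 = (m+2)+3 from by omega, mm'_three (by omega),
        show (m+2)+3+2 = (m+4)+3 from by omega, mm'_three (by omega)]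
      have := IH (m + 2) (by omega)
      simp only [show m+2+1 = m+3 from rfl, show m+2+2 = m+4 from rfl] at *
      omega

lemma mm'_43 : ∀ n, 1 ≤ n → 4 * mm' n ≤ 3 * mm' (n + 1) := by
  intro n
  induction n using Nat.strong_induction_on with
  | _ n IH =>
    match n, IH with
    | 0, _ => intro h; omega
    | 1, _ => intro _; norm_num [mm', mmBound]
    | 2, _ => intro _; norm_num [mm', mmBound]
    | 3, _ => intro _; norm_num [mm', mmBound]
    | 4, _ => intro _; norm_num [mm', mmBound]
    | (m+5), IH =>
      intro _
      rw [show m + 5 = (m+2)+3 from by omega, mm'_three (by omega),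
        show (m+2)+3+1 = (m+3)+3 from by omega, mm'_three (by omega)]
      have := IH (m + 2) (by omega) (by omega)
      simp only [show m+2+1 = m+3 from rfl] at *
      omega

lemma mm'_id : ∀ n, n ≤ mm' n := by
  intro n
  induction n using Nat.strong_induction_on with
  | _ n IH =>
    match n, IH with
    | 0, _ => norm_num [mm', mmBound]
    | 1, _ => norm_num [mm', mmBound]
    | 2, _ => norm_num [mm', mmBound]
    | 3, _ => norm_num [mm', mmBound]
    | 4, _ => norm_num [mm', mmBound]
    | (m+5), IH =>
      rw [show m + 5 = (m+2)+3 from by omega, mm'_three (by omega)]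
      have := IH (m + 2) (by omega)
      omega

lemma mm'_key : ∀ k n d : ℕ, n = d + 3 + k → (n - d) * mm' d ≤ mm' n := by
  intro k
  induction k with
  | zero =>
    intro n d h
    subst h
    rw [show d + 3 + 0 - d = 3 from by omega]
    match d with
    | 0 => norm_num [mm', mmBound]
    | 1 => norm_num [mm', mmBound]
    | (m+2) => rw [mm'_three (by omega)]
  | succ k IH =>
    intro n d h
    match d with
    | 0 =>
      have h1 := mm'_id n
      have h2 : mm' 0 = 1 := mm'_small.1
      rw [h2]
      omega
    | (m+1) =>
      have h43 : 4 * mm' (m+1) ≤ 3 * mm' (m+2) := mm'_43 (m+1) (by omega)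
      have hIH : (n - (m+2)) * mm' (m+2) ≤ mm' n := IH n (m+2) (by omega)
      have hc : 3 * ((n - (m+1)) * mm' (m+1)) ≤ 3 * ((n - (m+2)) * mm' (m+2)) := by
        calc 3 * ((n - (m+1)) * mm' (m+1)) = (3 * (n - (m+1))) * mm' (m+1) := by ring
        _ ≤ (4 * (n - (m+2))) * mm' (m+1) := by
            have : 3 * (n - (m+1)) ≤ 4 * (n - (m+2)) := by omega
            exact Nat.mul_le_mul_right _ this
        _ = (n - (m+2)) * (4 * mm' (m+1)) := by ring
        _ ≤ (n - (m+2)) * (3 * mm' (m+2)) := Nat.mul_le_mul_left _ h43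
        _ = 3 * ((n - (m+2)) * mm' (m+2)) := by ring
      omega

section Graph
variable {V : Type*}

lemma not_maxClique_subset_neighbors {G : SimpleGraph V} {s : Set V} (hs : MaxClique G s)
    {v : V} (h : s ⊆ G.neighborSet v) : False := by
  have hcl : G.IsClique (insert v s) := hs.1.insert (fun b hb _ => h hb)
  have heq := hs.2 _ hcl (Set.subset_insert v s)
  have hv : v ∈ s := heq ▸ Set.mem_insert v s
  exact G.irrefl (h hv)

lemma maxClique_cover {G : SimpleGraph V} {s : Set V} (hs : MaxClique G s) (v : V) :
    ∃ u ∈ (G.neighborSet v)ᶜ, u ∈ s := by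
  by_contra h
  push_neg at h
  exact not_maxClique_subset_neighbors hs
    (fun x hx => by_contra fun hn => h x hn hx)

lemma nat_card_sigma {ι : Type*} [Fintype ι] (f : ι → Type*) [∀ i, Finite (f i)] :
    Nat.card (Σ i, f i) = ∑ i, Nat.card (f i) := by
  letI : ∀ i, Fintype (f i) := fun i => Fintype.ofFinite _
  simp [Nat.card_eq_fintype_card, Fintype.card_sigma]

lemma cover_card_le [Finite V] (Q : Set V → Prop) (A : Finset V)
    (h : ∀ s, Q s → ∃ u ∈ A, u ∈ s) :
    Nat.card {s : Set V // Q s} ≤ ∑ u ∈ A, Nat.card {s : Set V // Q s ∧ u ∈ s} := by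
  classical
  set F : {s : Set V // Q s} → Σ u : A, {s : Set V // Q s ∧ u.1 ∈ s} :=
    fun ⟨s, hst⟩ => ⟨⟨(h s hst).choose, (h s hst).choose_spec.1⟩,
      ⟨s, hst, (h s hst).choose_spec.2⟩⟩ with hF
  have hval : ∀ x : {s : Set V // Q s}, ((F x).2.1 : Set V) = x.1 := by
    rintro ⟨s, hs⟩; rfl
  have hinj : Function.Injective F := by
    intro a b he
    apply Subtype.ext
    rw [← hval a, ← hval b, he]
  calc Nat.card {s : Set V // Q s} ≤ Nat.card (Σ u : A, {s : Set V // Q s ∧ u.1 ∈ s}) :=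
        Nat.card_le_card_of_injective F hinj
    _ = ∑ u : A, Nat.card {s : Set V // Q s ∧ u.1 ∈ s} := nat_card_sigma _
    _ = ∑ u ∈ A, Nat.card {s : Set V // Q s ∧ u ∈ s} := Finset.sum_coe_sort A (fun u => Nat.card {s : Set V // Q s ∧ u ∈ s})

lemma card_cliquesAt_le [Finite V] (G : SimpleGraph V) (u : V) :
    Nat.card {s : Set V // MaxClique G s ∧ u ∈ s}
      ≤ numMaxCliques (G.induce (G.neighborSet u)) := by
  classical
  set N := G.neighborSet u with hN
  -- structural fact
  have hstruct : ∀ s : Set V, MaxClique G s → u ∈ s →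
      s = insert u (Subtype.val '' (Subtype.val ⁻¹' s : Set N)) := by
    intro s hs hu
    rw [Set.image_preimage_eq_inter_range, Subtype.range_coe]
    ext x
    constructor
    · intro hx
      rcases eq_or_ne x u with rfl | hne
      · exact Set.mem_insert _ _
      · exact Set.mem_insert_of_mem _ ⟨hx, (G.mem_neighborSet u x).mpr (hs.1 hu hx (Ne.symm hne))⟩
    · rintro (rfl | ⟨hx, -⟩)
      · exact hu
      · exact hx
  have hmax : ∀ s : Set V, MaxClique G s → u ∈ s →
      MaxClique (G.induce N) (Subtype.val ⁻¹' s) := by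
    intro s hs hu
    constructor
    · intro a ha b hb hne
      exact hs.1 ha hb (Subtype.coe_injective.ne hne)
    · intro t' hcl' hsub
      have himg : G.IsClique (Subtype.val '' t') := by
        rintro x ⟨a, ha, rfl⟩ y ⟨b, hb, rfl⟩ hne
        exact hcl' ha hb (fun h => hne (congrArg _ h))
      have hcl2 : G.IsClique (insert u (Subtype.val '' t')) := by
        refine himg.insert (fun b hb _ => ?_)
        obtain ⟨a, _, rfl⟩ := hb
        exact (G.mem_neighborSet u a).mp a.2
      have hsub2 : s ⊆ insert u (Subtype.val '' t') := by
        intro x hx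
        rcases eq_or_ne x u with rfl | hne
        · exact Set.mem_insert _ _
        · have hxN : x ∈ N := (G.mem_neighborSet u x).mpr (hs.1 hu hx (Ne.symm hne))
          exact Set.mem_insert_of_mem _ ⟨⟨x, hxN⟩, hsub hx, rfl⟩
      have heq := hs.2 _ hcl2 hsub2
      apply Set.Subset.antisymm hsub
      intro a ha
      have : (a : V) ∈ s := heq ▸ Set.mem_insert_of_mem _ ⟨a, ha, rfl⟩
      exact this
  set F : {s : Set V // MaxClique G s ∧ u ∈ s} → {t : Set N // MaxClique (G.induce N) t} :=
    fun ⟨s, hs, hu⟩ => ⟨Subtype.val ⁻¹' s, hmax s hs hu⟩ with hF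
  have hinj : Function.Injective F := by
    rintro ⟨s1, h1, hu1⟩ ⟨s2, h2, hu2⟩ he
    simp only [hF, Subtype.mk.injEq] at he
    apply Subtype.ext
    simp only
    rw [hstruct s1 h1 hu1, hstruct s2 h2 hu2, he]
  exact Nat.card_le_card_of_injective F hinj

end Graph


universe u

theorem numMaxCliques_le_mm' (n : ℕ) :
    ∀ (W : Type u) [Fintype W] (G : SimpleGraph W),
      Fintype.card W = n → numMaxCliques G ≤ mm' n := by
  induction n using Nat.strong_induction_on with
  | _ n IH =>
    intro W _ G hcard
    classical
    rcases Nat.eq_zero_or_pos n with rfl | hn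
    · haveI : IsEmpty W := Fintype.card_eq_zero_iff.mp hcard
      have hone : numMaxCliques G ≤ 1 := by
        unfold numMaxCliques
        rcases isEmpty_or_nonempty {s : Set W // MaxClique G s} with he | hne
        · rw [Nat.card_of_isEmpty]; omega
        · have hsub : Subsingleton {s : Set W // MaxClique G s} := by
            constructor
            rintro ⟨s1, _⟩ ⟨s2, _⟩
            apply Subtype.ext
            ext x
            exact (IsEmpty.false x).elim
          exact le_of_eq (Nat.card_eq_one_iff_unique.mpr ⟨hsub, hne⟩)
      have : mm' 0 = 1 := mm'_small.1
      omega
    haveI : Nonempty W := Fintype.card_pos_iff.mp (by omega)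
    set d : W → ℕ := fun u => Nat.card (G.neighborSet u) with hd
    obtain ⟨v, -, hv⟩ := Finset.exists_max_image Finset.univ d
      ⟨Classical.arbitrary W, Finset.mem_univ _⟩
    have hv' : ∀ u, d u ≤ d v := fun u => hv u (Finset.mem_univ u)
    have hncard : ∀ u, (G.neighborSet u).ncard = d u := fun u =>
      (Nat.card_coe_set_eq _).symm
    have hcardW : Nat.card W = n := by rw [Nat.card_eq_fintype_card, hcard]
    have hdeg : ∀ u, d u ≤ n - 1 := by
      intro u
      have hsub : G.neighborSet u ⊆ Set.univ \ {u} := by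
        intro x hx
        have hadj : G.Adj u x := (G.mem_neighborSet u x).mp hx
        refine ⟨Set.mem_univ x, fun h => ?_⟩
        rw [Set.mem_singleton_iff] at h
        subst h
        exact G.irrefl hadj
      have h1 := Set.ncard_le_ncard hsub (Set.toFinite _)
      rwa [Set.ncard_diff_singleton_of_mem (Set.mem_univ u), Set.ncard_univ, hcardW,
        hncard] at h1
    set A : Set W := (G.neighborSet v)ᶜ with hA
    have hAcard : A.ncard = n - d v := by
      have h2 := Set.ncard_add_ncard_compl (G.neighborSet v)
      rw [hncard, hcardW, ← hA] at h2
      omega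
    have hvA : v ∈ A := by simp [hA]
    have step1 : numMaxCliques G ≤
        ∑ u ∈ A.toFinset, Nat.card {s : Set W // MaxClique G s ∧ u ∈ s} :=
      cover_card_le _ A.toFinset (fun s hs => by
        obtain ⟨u, hu, hus⟩ := maxClique_cover hs v
        exact ⟨u, Set.mem_toFinset.mpr hu, hus⟩)
    have step2 : ∀ u, Nat.card {s : Set W // MaxClique G s ∧ u ∈ s} ≤ mm' (d v) := by
      intro u
      refine le_trans (card_cliquesAt_le G u) (le_trans ?_ (mm'_mono (hv' u)))
      haveI : Fintype (G.neighborSet u) := Fintype.ofFinite _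
      have hc : Fintype.card (G.neighborSet u) = d u := by
        rw [← Nat.card_eq_fintype_card]
      exact IH (d u) (by have := hdeg u; omega) _ (G.induce _) hc
    have step3 : numMaxCliques G ≤ (n - d v) * mm' (d v) := by
      calc numMaxCliques G
          ≤ ∑ u ∈ A.toFinset, Nat.card {s : Set W // MaxClique G s ∧ u ∈ s} := step1
        _ ≤ A.toFinset.card * mm' (d v) := by
            have := Finset.sum_le_card_nsmul A.toFinset _ _ (fun u _ => step2 u)
            simpa [smul_eq_mul] using this
        _ = (n - d v) * mm' (d v) := by rw [← Set.ncard_eq_toFinset_card', hAcard]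
    have hpos : 1 ≤ n - d v := by
      have h3 : A.toFinset.Nonempty := ⟨v, Set.mem_toFinset.mpr hvA⟩
      have h4 := Finset.card_pos.mpr h3
      rw [← Set.ncard_eq_toFinset_card', hAcard] at h4
      omega
    have hdn := hdeg v
    rcases (show n - d v = 1 ∨ n - d v = 2 ∨ 3 ≤ n - d v by omega) with h1 | h1 | h1
    · rw [h1, one_mul] at step3
      exact le_trans step3 (mm'_mono (by omega))
    · have hdv : d v = n - 2 := by omega
      have h5 := mm'_two (n - 2)
      rw [show n - 2 + 2 = n from by omega] at h5
      rw [h1, hdv] at step3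
      omega
    · exact le_trans step3 (mm'_key (n - d v - 3) n (d v) (by omega))
section Multipartite
variable {V : Type*} {t : ℕ} {p : V → Fin t} {G : SimpleGraph V}

lemma maxclique_iff (hAdj : ∀ a b : V, G.Adj a b ↔ p a ≠ p b)
    (hne : ∀ i : Fin t, Nonempty {x : V // p x = i}) (s : Set V) :
    MaxClique G s ↔ (Set.InjOn p s ∧ ∀ i, ∃ x ∈ s, p x = i) := by
  constructor
  · rintro ⟨hcl, hmax⟩
    constructor
    · intro x hx y hy hpxy
      by_contra hne'
      exact ((hAdj x y).mp (hcl hx hy hne')) hpxy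
    · intro i
      by_contra h
      push_neg at h
      obtain ⟨x0⟩ := hne i
      have hcl2 : G.IsClique (insert x0.1 s) := by
        refine hcl.insert (fun b hb hne' => (hAdj _ _).mpr ?_)
        rw [x0.2]
        exact fun hc => h b hb hc.symm
      have heq := hmax _ hcl2 (Set.subset_insert _ _)
      exact h x0.1 (heq ▸ Set.mem_insert _ _) x0.2
  · rintro ⟨hinj, hsurj⟩
    constructor
    · intro x hx y hy hne'
      exact (hAdj x y).mpr (fun h => hne' (hinj hx hy h))
    · intro u hclu hsu
      apply Set.Subset.antisymm hsu
      intro x hx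
      obtain ⟨y, hy, hpy⟩ := hsurj (p x)
      rcases eq_or_ne x y with rfl | hxy
      · exact hy
      · exact absurd hpy ((hAdj y x).mp (hclu (hsu hy) hx (Ne.symm hxy)))

lemma numMaxCliques_multipartite (hAdj : ∀ a b : V, G.Adj a b ↔ p a ≠ p b)
    (hne : ∀ i : Fin t, Nonempty {x : V // p x = i}) :
    numMaxCliques G = ∏ i : Fin t, Nat.card {x : V // p x = i} := by
  classical
  set Φ : (∀ i : Fin t, {x : V // p x = i}) → {s : Set V // MaxClique G s} :=
    fun g => ⟨Set.range (fun i => (g i).1), by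
      rw [maxclique_iff hAdj hne]
      constructor
      · rintro x ⟨i, rfl⟩ y ⟨i', rfl⟩ hp
        rw [(g i).2, (g i').2] at hp
        rw [hp]
      · intro i
        exact ⟨(g i).1, ⟨i, rfl⟩, (g i).2⟩⟩ with hΦ
  have hbij : Function.Bijective Φ := by
    constructor
    · intro g1 g2 he
      simp only [hΦ, Subtype.mk.injEq] at he
      funext i
      have h1 : (g1 i).1 ∈ Set.range (fun i => (g2 i).1) := he ▸ ⟨i, rfl⟩
      obtain ⟨i', hi'⟩ := h1
      change (g2 i').1 = (g1 i).1 at hi'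
      have hii : i' = i := by rw [← (g2 i').2, hi', (g1 i).2]
      exact Subtype.ext (by rw [← hi', hii])
    · rintro ⟨s, hs⟩
      rw [maxclique_iff hAdj hne] at hs
      obtain ⟨hinj, hsurj⟩ := hs
      refine ⟨fun i => ⟨(hsurj i).choose, (hsurj i).choose_spec.2⟩, ?_⟩
      simp only [hΦ, Subtype.mk.injEq]
      apply Set.Subset.antisymm
      · rintro x ⟨i, rfl⟩
        exact (hsurj i).choose_spec.1
      · intro x hx
        refine ⟨p x, ?_⟩
        exact hinj (hsurj (p x)).choose_spec.1 hx (hsurj (p x)).choose_spec.2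
  rw [numMaxCliques, ← Nat.card_congr (Equiv.ofBijective Φ hbij), Nat.card_pi]

end Multipartite

theorem stmt_19 {V : Type*} [Fintype V] (hn : 1 ≤ Fintype.card V)
    (t : ℕ) (p : V → Fin t)
    (G : SimpleGraph V) (hAdj : ∀ a b : V, G.Adj a b ↔ p a ≠ p b)
    (hsizes : ∃ j : Fin t, (∀ i : Fin t, i ≠ j → Nat.card {x : V // p x = i} = 3) ∧
      (Nat.card {x : V // p x = j} = 3 ∨
        ((Fintype.card V) % 3 ≠ 0 ∧
          (Nat.card {x : V // p x = j} = 2 ∨ Nat.card {x : V // p x = j} = 4)))) :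
    numMaxCliques G = mmBound (Fintype.card V) ∧
    ∀ G' : SimpleGraph V, numMaxCliques G' ≤ mmBound (Fintype.card V) := by
  classical
  constructor
  case right =>
    intro G'
    exact le_trans (numMaxCliques_le_mm' (Fintype.card V) V G' rfl)
      (mm'_le_mmBound _)
  case left =>
    obtain ⟨j, hj3, hj⟩ := hsizes
    set c : Fin t → ℕ := fun i => Nat.card {x : V // p x = i} with hc
    have hcj : c j = 3 ∨ c j = 2 ∨ c j = 4 := by
      rcases hj with h | ⟨-, h | h⟩
      · exact Or.inl h
      · exact Or.inr (Or.inl h)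
      · exact Or.inr (Or.inr h)
    have hne : ∀ i : Fin t, Nonempty {x : V // p x = i} := by
      intro i
      have hpos : 0 < c i := by
        rcases eq_or_ne i j with rfl | hij
        · omega
        · rw [hc]; simp only []; rw [hj3 i hij]; omega
      exact (Nat.card_pos_iff.mp hpos).1
    have ht : 0 < t := j.pos
    have hprod : numMaxCliques G = c j * 3 ^ (t - 1) := by
      rw [numMaxCliques_multipartite hAdj hne,
        ← Finset.mul_prod_erase Finset.univ c (Finset.mem_univ j)]
      congr 1
      rw [Finset.prod_congr rfl (fun i hi => hj3 i (Finset.ne_of_mem_erase hi)),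
        Finset.prod_const, Finset.card_erase_of_mem (Finset.mem_univ j),
        Finset.card_univ, Fintype.card_fin]
    have hsum : Fintype.card V = c j + 3 * (t - 1) := by
      have h1 : Nat.card V = Nat.card (Σ i : Fin t, {x : V // p x = i}) :=
        Nat.card_congr (Equiv.sigmaFiberEquiv p).symm
      rw [nat_card_sigma] at h1
      rw [← Nat.card_eq_fintype_card, h1,
        ← Finset.add_sum_erase Finset.univ c (Finset.mem_univ j)]
      congr 1
      rw [Finset.sum_congr rfl (fun i hi => hj3 i (Finset.ne_of_mem_erase hi)),
        Finset.sum_const, Finset.card_erase_of_mem (Finset.mem_univ j),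
        Finset.card_univ, Fintype.card_fin, smul_eq_mul, mul_comm]
    rw [hprod]
    set n := Fintype.card V with hn'
    rcases hcj with h | h | h <;> rw [h] at hsum ⊢
    · have h0 : n % 3 = 0 := by omega
      have h1 : n / 3 = t := by omega
      rw [mmBound, if_pos h0, h1]
      conv_rhs => rw [show t = (t-1)+1 from by omega]
      rw [pow_succ]
      ring
    · have h0 : n % 3 = 2 := by omega
      have h1 : (n - 2) / 3 = t - 1 := by omega
      rw [mmBound, if_neg (by omega), if_neg (by omega), h1]
    · have h0 : n % 3 = 1 := by omega
      have h1 : (n - 4) / 3 = t - 1 := by omega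
      rw [mmBound, if_neg (by omega), if_pos h0, h1]
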